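/- Let w be a string of length n, x a position with 1 ≤ x < n, A_x = Substr(w[1..x]) and B_x = Substr(w[x..n]). Then the substrings in (A_x ∪ B_{x+1}) \ (A_x ∪ B_{x+2}) are exactly the prefixes of w[x+1..n] of length greater than max(α,β), where α is the maximum length of a prefix of w[x+1..n] occurring in w[1..x] and β is the maximum length of a prefix of w[x+1..n] having an occurrence starting at a position ≥ x+2. Consequently |A_x ∪ B_{x+1}| - |A_x ∪ B_{x+2}| = n - x - max(α,β). -/
import Mathlib


open scoped Classical

/-- The set of (nonempty) substrings of `u`: the factors `u[i..j]` for
`1 ≤ i ≤ j ≤ |u|` (1-based positions). -/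
noncomputable def SubstrF {α : Type*} (u : List α) : Finset (List α) :=
  (((Finset.Icc 1 u.length) ×ˢ (Finset.Icc 1 u.length)).filter
      (fun q : ℕ × ℕ => q.1 ≤ q.2)).image
    (fun q : ℕ × ℕ => (u.drop (q.1 - 1)).take (q.2 - q.1 + 1))

/-- The set `N(w,k)` of distinct (nonempty) substrings of `w` having an
occurrence `[i,j]` not crossing position `k`, i.e. with `j < k` or `k < i`. -/
noncomputable def NSet {α : Type*} (w : List α) (k : ℕ) : Finset (List α) :=
  (((Finset.Icc 1 w.length) ×ˢ (Finset.Icc 1 w.length)).filter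
      (fun q : ℕ × ℕ => q.1 ≤ q.2 ∧ (q.2 < k ∨ k < q.1))).image
    (fun q : ℕ × ℕ => (w.drop (q.1 - 1)).take (q.2 - q.1 + 1))

/-- `x` occurs in `w` at (1-based) position `s`. -/
def OccAt {α : Type*} (w x : List α) (s : ℕ) : Prop :=
  1 ≤ s ∧ s + x.length - 1 ≤ w.length ∧ (w.drop (s - 1)).take x.length = x

lemma mem_SubstrF {α : Type*} {u l : List α} :
    l ∈ SubstrF u ↔ l ≠ [] ∧ l <:+: u := by
  constructor
  · intro h
    simp only [SubstrF, Finset.mem_image, Finset.mem_filter, Finset.mem_product,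
      Finset.mem_Icc] at h
    obtain ⟨⟨i, j⟩, ⟨⟨⟨hi1, hi2⟩, hj1, hj2⟩, hij⟩, rfl⟩ := h
    refine ⟨?_, ((u.drop (i - 1)).take_prefix _).isInfix.trans (u.drop_suffix _).isInfix⟩
    apply List.ne_nil_of_length_pos
    rw [List.length_take, List.length_drop]
    simp only at *
    omega
  · rintro ⟨hne, s, t, rfl⟩
    have hl : 1 ≤ l.length := List.length_pos_iff.2 hne
    simp only [SubstrF, Finset.mem_image, Finset.mem_filter, Finset.mem_product,
      Finset.mem_Icc]
    refine ⟨(s.length + 1, s.length + l.length), ⟨⟨⟨?_, ?_⟩, ?_, ?_⟩, ?_⟩, ?_⟩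
    · simp only [List.length_append]; omega
    · simp only [List.length_append]; omega
    · simp only [List.length_append]; omega
    · simp only [List.length_append]; omega
    · simp only [List.length_append]; omega
    · have h1 : s.length + 1 - 1 = s.length := by omega
      have h2 : s.length + l.length - (s.length + 1) + 1 = l.length := by omega
      simp only [h1, h2, List.append_assoc, List.drop_left, List.take_left]

lemma infix_iff_prefix_or {α : Type*} {l u : List α} :
    l <:+: u ↔ l <+: u ∨ l <:+: u.drop 1 := by
  constructor
  · rintro ⟨s, t, rfl⟩
    cases s with
    | nil => exact Or.inl ⟨t, by simp⟩
    | cons a s' => exact Or.inr ⟨s', t, by simp⟩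
  · rintro (h | h)
    · exact h.isInfix
    · exact h.trans (u.drop_suffix 1).isInfix

lemma occ_iff {α : Type*} {w p : List α} {x : ℕ} (hxw : x + 1 ≤ w.length) :
    (∃ s, x + 2 ≤ s ∧ OccAt w p s) ↔ p <:+: w.drop (x + 1) := by
  constructor
  · rintro ⟨s, hs, h1, h2, h3⟩
    have hdd : w.drop (s - 1) = (w.drop (x + 1)).drop (s - 1 - (x + 1)) := by
      rw [List.drop_drop]; congr 1; omega
    refine List.IsInfix.trans ?_ ((w.drop (x + 1)).drop_suffix (s - 1 - (x + 1))).isInfix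
    rw [← hdd, ← h3]
    exact (List.take_prefix _ _).isInfix
  · rintro ⟨s, t, h⟩
    have hlen := congrArg List.length h
    simp only [List.length_drop, List.length_append] at hlen
    refine ⟨x + 2 + s.length, by omega, by omega, by omega, ?_⟩
    have h4 : x + 2 + s.length - 1 = x + 1 + s.length := by omega
    have h5 : w.drop (x + 1 + s.length) = p ++ t := by
      rw [← List.drop_drop, ← h, List.append_assoc, List.drop_left]
    rw [h4, h5, List.take_left]

theorem removed_substrings_are_long_prefixes {α : Type*} (w : List α) (n x : ℕ)
    (hn : w.length = n) (hx1 : 1 ≤ x) (hx2 : x < n) (al be : ℕ)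
    (hal : IsGreatest {ℓ : ℕ | ℓ ≤ n - x ∧ ((w.drop x).take ℓ) <:+: (w.take x)} al)
    (hbe : IsGreatest
      {ℓ : ℕ | ℓ ≤ n - x ∧ ∃ s, x + 2 ≤ s ∧ OccAt w ((w.drop x).take ℓ) s} be) :
    (SubstrF (w.take x) ∪ SubstrF (w.drop x)) \ (SubstrF (w.take x) ∪ SubstrF (w.drop (x + 1)))
        = (Finset.Icc (max al be + 1) (n - x)).image (fun ℓ => (w.drop x).take ℓ)
    ∧ (SubstrF (w.take x) ∪ SubstrF (w.drop x)).card
        - (SubstrF (w.take x) ∪ SubstrF (w.drop (x + 1))).card = n - x - max al be := by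
  set u := w.drop x with hu_def
  have hu : u.length = n - x := by simp [hu_def, hn]
  have hxw' : x + 1 ≤ w.length := by omega
  have hdrop1 : u.drop 1 = w.drop (x + 1) := by
    rw [hu_def, List.drop_drop]
  have hlen : ∀ ℓ, ℓ ≤ n - x → (u.take ℓ).length = ℓ := by
    intro ℓ hℓ; rw [List.length_take]; omega
  -- downward closure for α
  have hal_mono : ∀ ℓ, ℓ ≤ al → (u.take ℓ) <:+: w.take x := by
    intro ℓ hℓ
    have h1 : u.take ℓ = (u.take al).take ℓ := by
      rw [List.take_take, min_eq_left hℓ]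
    rw [h1]
    exact (List.take_prefix _ _).isInfix.trans hal.1.2
  -- downward closure for β
  have hbe_mono : ∀ ℓ, ℓ ≤ be → ∃ s, x + 2 ≤ s ∧ OccAt w (u.take ℓ) s := by
    intro ℓ hℓ
    obtain ⟨s, hs, h1, h2, h3⟩ := hbe.1.2
    have hbl : (u.take be).length = be := hlen be hbe.1.1
    have hll : (u.take ℓ).length = ℓ := hlen ℓ (le_trans hℓ hbe.1.1)
    refine ⟨s, hs, h1, by omega, ?_⟩
    have h4 : u.take ℓ = (u.take be).take ℓ := by
      rw [List.take_take, min_eq_left hℓ]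
    rw [hll, h4, ← h3, hbl, List.take_take, min_eq_left hℓ]
  have hP1 : ∀ ℓ, 1 ≤ ℓ → ℓ ≤ n - x → (u.take ℓ ∈ SubstrF (w.take x) ↔ ℓ ≤ al) := by
    intro ℓ h1 h2
    constructor
    · intro h
      exact hal.2 ⟨h2, (mem_SubstrF.1 h).2⟩
    · intro h
      refine mem_SubstrF.2 ⟨?_, hal_mono ℓ h⟩
      apply List.ne_nil_of_length_pos
      rw [hlen ℓ h2]; omega
  have hP2 : ∀ ℓ, 1 ≤ ℓ → ℓ ≤ n - x → (u.take ℓ ∈ SubstrF (w.drop (x + 1)) ↔ ℓ ≤ be) := by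
    intro ℓ h1 h2
    rw [mem_SubstrF]
    constructor
    · rintro ⟨-, hinf⟩
      exact hbe.2 ⟨h2, (occ_iff hxw').2 hinf⟩
    · intro h
      refine ⟨?_, (occ_iff hxw').1 (hbe_mono ℓ h)⟩
      apply List.ne_nil_of_length_pos
      rw [hlen ℓ h2]; omega
  have heq : (SubstrF (w.take x) ∪ SubstrF u) \ (SubstrF (w.take x) ∪ SubstrF (w.drop (x + 1)))
      = (Finset.Icc (max al be + 1) (n - x)).image (fun ℓ => u.take ℓ) := by
    ext l
    simp only [Finset.mem_sdiff, Finset.mem_union, Finset.mem_image, Finset.mem_Icc]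
    constructor
    · rintro ⟨h1, h2⟩
      push_neg at h2
      obtain ⟨h2A, h2B⟩ := h2
      obtain ⟨hne, hinf⟩ := mem_SubstrF.1 (h1.resolve_left h2A)
      have hpre : l <+: u := by
        rcases infix_iff_prefix_or.1 hinf with h | h
        · exact h
        · exact absurd (mem_SubstrF.2 ⟨hne, hdrop1 ▸ h⟩) h2B
      have hlen1 : 1 ≤ l.length := List.length_pos_iff.2 hne
      have hlen2 : l.length ≤ n - x := by
        have := hpre.length_le; omega
      have hl : l = u.take l.length := List.prefix_iff_eq_take.1 hpre
      refine ⟨l.length, ⟨?_, hlen2⟩, hl.symm⟩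
      have hA : ¬ l.length ≤ al := fun hh => h2A (hl ▸ (hP1 _ hlen1 hlen2).2 hh)
      have hB : ¬ l.length ≤ be := fun hh => h2B (hl ▸ (hP2 _ hlen1 hlen2).2 hh)
      omega
    · rintro ⟨ℓ, ⟨hℓ1, hℓ2⟩, rfl⟩
      have h1 : 1 ≤ ℓ := by omega
      have hne : u.take ℓ ≠ [] := by
        apply List.ne_nil_of_length_pos
        rw [hlen ℓ hℓ2]; omega
      refine ⟨Or.inr (mem_SubstrF.2 ⟨hne, (List.take_prefix ℓ u).isInfix⟩), ?_⟩
      rintro (h | h)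
      · have := (hP1 ℓ h1 hℓ2).1 h; omega
      · have := (hP2 ℓ h1 hℓ2).1 h; omega
  refine ⟨heq, ?_⟩
  have hsub : SubstrF (w.take x) ∪ SubstrF (w.drop (x + 1))
      ⊆ SubstrF (w.take x) ∪ SubstrF u := by
    apply Finset.union_subset_union_right
    intro l hl
    obtain ⟨hne, hinf⟩ := mem_SubstrF.1 hl
    exact mem_SubstrF.2 ⟨hne, (hdrop1 ▸ hinf).trans (u.drop_suffix 1).isInfix⟩
  rw [← Finset.card_sdiff_of_subset hsub, heq, Finset.card_image_of_injOn, Nat.card_Icc]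
  · omega
  · intro a ha b hb hab
    simp only [Finset.coe_Icc, Set.mem_Icc] at ha hb
    have := congrArg List.length hab
    rw [hlen a ha.2, hlen b hb.2] at this
    exact this
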